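/- Let Λ be a singular hyperbolic attractor of a C² vector field X, and let μ be an ergodic invariant measure supported on Λ but not on the set of singularities. Then μ has no zero Lyapunov exponent in F^{cu} transverse to the flow: there is no vector v ∈ F^{cu}(x) \ ⟨X(x)⟩ at a μ-generic regular point x whose Lyapunov exponent is zero. Indeed, if v had zero exponent, the sectional expansion of the plane spanned by X(x) and v would force the area to grow exponentially, contradicting that both spanning vectors have zero exponent. -/

import Mathlib

open MeasureTheory Filter Topology Metric
open scoped ENNReal

noncomputable section

/-- Points of the ambient manifold, modelled as `d`-dimensional Euclidean space. -/
abbrev Pt (d : ℕ) := EuclideanSpace ℝ (Fin d)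

variable {d : ℕ}

/-- The (unsigned) area of the parallelogram spanned by two vectors. -/
noncomputable def pArea (v w : Pt d) : ℝ :=
  Real.sqrt (‖v‖ ^ 2 * ‖w‖ ^ 2 - (inner ℝ v w : ℝ) ^ 2)

/-- The absolute value of the Jacobian (volume-expansion factor) of a linear map
restricted to a subspace `V`, computed via the Gram determinant. -/
noncomputable def jacOn (A : Pt d →L[ℝ] Pt d) (V : Submodule ℝ (Pt d)) : ℝ :=
  Real.sqrt (LinearMap.det
    ((LinearMap.adjoint ((A : Pt d →ₗ[ℝ] Pt d).comp V.subtype)).comp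
      ((A : Pt d →ₗ[ℝ] Pt d).comp V.subtype)))

/-- The vector field generating a flow `φ`. -/
noncomputable def Xof (φ : ℝ → Pt d → Pt d) (x : Pt d) : Pt d :=
  deriv (fun t => φ t x) 0

/-- Kolmogorov–Sinai (metric) entropy of a map `f` with respect to a measure `μ`:
supremum over finite measurable partitions (coded by measurable maps into `Fin (n+1)`)
of the asymptotic mean Shannon entropy of dynamical refinements. -/
noncomputable def metricEntropy {M : Type*} [MeasurableSpace M] (f : M → M) (μ : Measure M) : ℝ :=
  ⨆ (n : ℕ) (α : {g : M → Fin (n + 1) // Measurable g}),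
    Filter.atTop.liminf (fun m : ℕ =>
      (∑ s : Fin m → Fin (n + 1),
        Real.negMulLog ((μ {x | ∀ k : Fin m, (α : M → Fin (n + 1)) (f^[(k : ℕ)] x) = s k}).toReal))
        / m)

/-- The (upper) Lyapunov exponent of the vector `v` at the point `x` for the map `f`. -/
noncomputable def lyapSup (f : Pt d → Pt d) (x v : Pt d) : ℝ :=
  Filter.atTop.limsup (fun n : ℕ => Real.log ‖fderiv ℝ (f^[n]) x v‖ / n)

/-- The (lower) Lyapunov exponent of the vector `v` at the point `x` for the map `f`. -/
noncomputable def lyapInf (f : Pt d → Pt d) (x v : Pt d) : ℝ :=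
  Filter.atTop.liminf (fun n : ℕ => Real.log ‖fderiv ℝ (f^[n]) x v‖ / n)

/-- The sum of the positive Lyapunov exponents at a point: the exponential growth rate of
the maximal volume expansion of `Df^n` over all subspaces. -/
noncomputable def sumPosLyapAt (f : Pt d → Pt d) (x : Pt d) : ℝ :=
  Filter.atTop.limsup (fun n : ℕ =>
    Real.log (⨆ V : Submodule ℝ (Pt d), jacOn (fderiv ℝ (f^[n]) x) V) / n)

/-- The sum of the positive Lyapunov exponents of an (ergodic) measure, counted with
multiplicity. -/
noncomputable def sumPosLyap (f : Pt d → Pt d) (μ : Measure (Pt d)) : ℝ :=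
  ∫ x, sumPosLyapAt f x ∂μ

/-- The (Pesin) unstable set of `x` for an invertible map with inverse `g`: points whose
backward orbit approaches that of `x` exponentially fast. -/
def unstableSet (g : Pt d → Pt d) (x : Pt d) : Set (Pt d) :=
  {y | ∃ K > (0 : ℝ), ∃ c > (0 : ℝ), ∀ n : ℕ, dist (g^[n] y) (g^[n] x) ≤ K * Real.exp (-c * n)}

/-- `x` is forward generic for `μ` and `f`: Birkhoff averages along the forward orbit of `x`
converge weakly-* to `μ`. -/
def ForwardGeneric (f : Pt d → Pt d) (μ : Measure (Pt d)) (x : Pt d) : Prop :=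
  ∀ g : BoundedContinuousFunction (Pt d) ℝ,
    Tendsto (fun n : ℕ => (∑ i ∈ Finset.range n, g (f^[i] x)) / n) atTop (𝓝 (∫ y, g y ∂μ))

/-- `μ` is a physical measure for `f`: its basin of forward generic points has positive
Lebesgue measure. -/
def IsPhysical (f : Pt d → Pt d) (μ : Measure (Pt d)) : Prop :=
  0 < volume {x : Pt d | ForwardGeneric f μ x}

/-- SRB measure for an invertible map `f` with inverse `g`: an invariant probability measure
with a positive Lyapunov exponent almost everywhere, whose conditional measures on unstable
manifolds (along some measurable partition subordinate to the unstable lamination, with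
disintegration kernel `ρ`) are absolutely continuous with respect to the induced
(`k`-dimensional Hausdorff) volume on the unstable manifolds. -/
structure IsSRBFor (f g : Pt d → Pt d) (μ : Measure (Pt d)) : Prop where
  prob : IsProbabilityMeasure μ
  inv : MeasurePreserving f μ μ
  posLyap : ∀ᵐ x ∂μ, ∃ v : Pt d, v ≠ 0 ∧ 0 < lyapSup f x v
  absCont : ∃ (k : ℕ) (π : Pt d → Pt d) (ρ : ProbabilityTheory.Kernel (Pt d) (Pt d)),
    Measurable π ∧
    (∀ A : Set (Pt d), MeasurableSet A → μ A = ∫⁻ s, ρ s A ∂(μ.map π)) ∧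
    (∀ᵐ x ∂μ,
      π ⁻¹' {π x} ⊆ unstableSet g x ∧
      (∃ ε > (0 : ℝ), unstableSet g x ∩ Metric.ball x ε ⊆ π ⁻¹' {π x}) ∧
      ρ (π x) ≪ (Measure.hausdorffMeasure (k : ℝ) : Measure (Pt d)).restrict (π ⁻¹' {π x}))

/-- A singular hyperbolic attractor of a `C²` vector field (given by its flow `φ`) on
`d`-dimensional space: a compact invariant transitive topological attractor `Λ` containing
a singularity, carrying a continuous invariant splitting `E^{ss} ⊕ F^{cu}` which is
dominated, with `E^{ss}` uniformly contracted and `F^{cu}` sectionally expanded. -/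
structure SingularHyperbolicAttractor (d : ℕ) where
  /-- the flow -/
  φ : ℝ → Pt d → Pt d
  flow_zero : ∀ x, φ 0 x = x
  flow_add : ∀ s t x, φ (s + t) x = φ s (φ t x)
  /-- the vector field is `C²`, i.e. the flow is `C²` -/
  flow_smooth : ContDiff ℝ 2 (Function.uncurry φ)
  /-- the attractor -/
  Λ : Set (Pt d)
  compactΛ : IsCompact Λ
  invariantΛ : ∀ t, φ t '' Λ = Λ
  /-- `Λ` is a topological attractor -/
  attracting : ∃ U : Set (Pt d), IsOpen U ∧ Λ ⊆ U ∧
    (⋂ t ∈ Set.Ici (0 : ℝ), φ t '' closure U) = Λ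
  /-- transitivity: some point has a dense forward orbit in `Λ` -/
  transitive : ∃ x ∈ Λ, Λ ⊆ closure (⋃ t ∈ Set.Ici (0 : ℝ), {φ t x})
  /-- `Λ` contains a singularity -/
  exists_sing : ∃ σ ∈ Λ, Xof φ σ = 0
  /-- the strong stable bundle -/
  Ess : Pt d → Submodule ℝ (Pt d)
  /-- the sectionally expanded center-unstable bundle -/
  Fcu : Pt d → Submodule ℝ (Pt d)
  isCompl : ∀ x ∈ Λ, IsCompl (Ess x) (Fcu x)
  /-- continuity of the splitting, via the projection onto `Ess` along `Fcu` -/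
  proj : Pt d → Pt d →L[ℝ] Pt d
  proj_cont : ContinuousOn proj Λ
  proj_idem : ∀ x ∈ Λ, (proj x).comp (proj x) = proj x
  proj_range : ∀ x ∈ Λ, LinearMap.range (proj x : Pt d →ₗ[ℝ] Pt d) = Ess x
  proj_ker : ∀ x ∈ Λ, LinearMap.ker (proj x : Pt d →ₗ[ℝ] Pt d) = Fcu x
  /-- invariance of the splitting under the derivative cocycle -/
  inv_Ess : ∀ x ∈ Λ, ∀ t : ℝ,
    (Ess x).map (fderiv ℝ (φ t) x : Pt d →ₗ[ℝ] Pt d) = Ess (φ t x)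
  inv_Fcu : ∀ x ∈ Λ, ∀ t : ℝ,
    (Fcu x).map (fderiv ℝ (φ t) x : Pt d →ₗ[ℝ] Pt d) = Fcu (φ t x)
  /-- the constants of singular hyperbolicity -/
  C : ℝ
  lam : ℝ
  C_pos : 0 < C
  lam_pos : 0 < lam
  /-- domination -/
  domination : ∀ x ∈ Λ, ∀ t > (0 : ℝ), ∀ v ∈ Ess x, ∀ w ∈ Fcu (φ t x),
    ‖fderiv ℝ (φ t) x v‖ * ‖fderiv ℝ (φ (-t)) (φ t x) w‖ ≤
      C * Real.exp (-lam * t) * ‖v‖ * ‖w‖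
  /-- uniform contraction of `Ess` -/
  contraction : ∀ x ∈ Λ, ∀ t > (0 : ℝ), ∀ v ∈ Ess x,
    ‖fderiv ℝ (φ t) x v‖ ≤ C * Real.exp (-lam * t) * ‖v‖
  /-- `Fcu` contains two non-collinear vectors -/
  fcu_dim : ∀ x ∈ Λ, 2 ≤ Module.finrank ℝ (Fcu x)
  /-- sectional expansion of `Fcu` -/
  sectional : ∀ x ∈ Λ, ∀ t > (0 : ℝ), ∀ v ∈ Fcu x, ∀ w ∈ Fcu x,
    LinearIndependent ℝ ![v, w] →
    C * Real.exp (lam * t) * pArea v w ≤ pArea (fderiv ℝ (φ t) x v) (fderiv ℝ (φ t) x w)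

namespace SingularHyperbolicAttractor

variable (D : SingularHyperbolicAttractor d)

/-- The time-one map of the flow. -/
noncomputable def f : Pt d → Pt d := D.φ 1

/-- The set of singularities of the vector field inside `Λ`. -/
def Sing : Set (Pt d) := {x | x ∈ D.Λ ∧ Xof D.φ x = 0}

/-- The potential `V = -log |det Df|_{F^{cu}}|`. -/
noncomputable def Vfun (x : Pt d) : ℝ :=
  - Real.log (jacOn (fderiv ℝ (D.φ 1) x) (D.Fcu x))

/-- SRB measure for (the time-one map of) the flow of the attractor. -/
def IsSRB (μ : Measure (Pt d)) : Prop := IsSRBFor (D.φ 1) (D.φ (-1)) μ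

/-- Topological pressure of a potential `ψ` on the attractor, defined by the variational
principle over ergodic invariant probability measures supported on `Λ`. -/
noncomputable def pressure (ψ : Pt d → ℝ) : ℝ :=
  sSup {r : ℝ | ∃ ν : Measure (Pt d), Ergodic (D.φ 1) ν ∧ IsProbabilityMeasure ν ∧
    ν D.Λᶜ = 0 ∧ r = metricEntropy (D.φ 1) ν + ∫ x, ψ x ∂ν}

/-- Equilibrium state for the potential `ψ`: an invariant probability measure supported on
`Λ` realizing the pressure. -/
def IsEquilibriumState (ψ : Pt d → ℝ) (μ : Measure (Pt d)) : Prop :=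
  IsProbabilityMeasure μ ∧ MeasurePreserving (D.φ 1) μ μ ∧ μ D.Λᶜ = 0 ∧
    metricEntropy (D.φ 1) μ + ∫ x, ψ x ∂μ = D.pressure ψ

end SingularHyperbolicAttractor

/-- The `(n,ε)`-Bowen ball centered at `x`. -/
def bowenBall (f : Pt d → Pt d) (n : ℕ) (ε : ℝ) (x : Pt d) : Set (Pt d) :=
  {y | ∀ i < n, dist (f^[i] x) (f^[i] y) < ε}

/-- The topological support of a measure. -/
def msupport (μ : Measure (Pt d)) : Set (Pt d) := {x | ∀ U ∈ 𝓝 x, 0 < μ U}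

end

section AuxLemmas

variable {d : ℕ}

lemma pArea_le (v w : Pt d) : pArea v w ≤ ‖v‖ * ‖w‖ := by
  have h : ‖v‖ ^ 2 * ‖w‖ ^ 2 - (inner ℝ v w : ℝ) ^ 2 ≤ (‖v‖ * ‖w‖) ^ 2 := by
    nlinarith [sq_nonneg (inner ℝ v w : ℝ)]
  calc pArea v w ≤ Real.sqrt ((‖v‖ * ‖w‖) ^ 2) := Real.sqrt_le_sqrt h
    _ = ‖v‖ * ‖w‖ := Real.sqrt_sq (by positivity)

lemma pArea_pos {v w : Pt d} (hw : w ≠ 0) (h : ∀ a : ℝ, v ≠ a • w) : 0 < pArea v w := by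
  have hw' : ‖w‖ ≠ 0 := norm_ne_zero_iff.2 hw
  have key : ∀ c : ℝ, ‖w‖ • v ≠ c • w := by
    intro c hEq
    apply h (c / ‖w‖)
    have := congrArg (fun z : Pt d => (‖w‖)⁻¹ • z) hEq
    simpa [smul_smul, inv_mul_cancel₀ hw', div_eq_inv_mul, mul_comm] using this
  have h1 : (inner ℝ v w : ℝ) < ‖v‖ * ‖w‖ :=
    inner_lt_norm_mul_iff_real.2 (key ‖v‖)
  have h2 : (inner ℝ (-v) w : ℝ) < ‖-v‖ * ‖w‖ := by
    refine inner_lt_norm_mul_iff_real.2 ?_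
    intro hEq
    apply key (-‖-v‖)
    have := congrArg (fun z : Pt d => -z) hEq
    simpa [smul_neg, neg_smul] using this
  rw [inner_neg_left, norm_neg] at h2
  have h2' : -(‖v‖ * ‖w‖) < (inner ℝ v w : ℝ) := by linarith
  rw [pArea, Real.sqrt_pos]
  nlinarith

namespace SingularHyperbolicAttractor

variable (D : SingularHyperbolicAttractor d)

lemma phi_contDiff (t : ℝ) : ContDiff ℝ 2 (D.φ t) :=
  D.flow_smooth.comp (contDiff_const.prodMk contDiff_id)

lemma phi_diff (t : ℝ) : Differentiable ℝ (D.φ t) :=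
  (D.phi_contDiff t).differentiable (by norm_num)

lemma curve_hasDerivAt (x : Pt d) : HasDerivAt (fun s => D.φ s x) (Xof D.φ x) 0 := by
  have hd : Differentiable ℝ (fun s : ℝ => D.φ s x) := by
    have : Differentiable ℝ (Function.uncurry D.φ ∘ fun s : ℝ => (s, x)) :=
      (D.flow_smooth.differentiable (by norm_num)).comp
        (differentiable_id.prodMk (differentiable_const x))
    exact this
  exact (hd 0).hasDerivAt

lemma Xof_image (x : Pt d) (t : ℝ) :
    Xof D.φ (D.φ t x) = fderiv ℝ (D.φ t) x (Xof D.φ x) := by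
  have h1 : (fun s => D.φ s (D.φ t x)) = fun s => D.φ t (D.φ s x) := by
    funext s
    rw [← D.flow_add, ← D.flow_add, add_comm]
  have hF : HasFDerivAt (D.φ t) (fderiv ℝ (D.φ t) x) ((fun s => D.φ s x) 0) := by
    rw [show (fun s => D.φ s x) 0 = x from D.flow_zero x]
    exact (D.phi_diff t x).hasFDerivAt
  have h2 : HasDerivAt (fun s => D.φ t (D.φ s x)) (fderiv ℝ (D.φ t) x (Xof D.φ x)) 0 :=
    hF.comp_hasDerivAt 0 (D.curve_hasDerivAt x)
  have h3 : HasDerivAt (fun s => D.φ s (D.φ t x)) (fderiv ℝ (D.φ t) x (Xof D.φ x)) 0 := by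
    rw [h1]; exact h2
  exact h3.deriv

lemma inverse_deriv (x : Pt d) (t : ℝ) (w : Pt d) :
    fderiv ℝ (D.φ t) (D.φ (-t) x) (fderiv ℝ (D.φ (-t)) x w) = w := by
  have hcomp : D.φ t ∘ D.φ (-t) = id := by
    funext y
    simp only [Function.comp_apply, id]
    rw [← D.flow_add]
    simp [D.flow_zero]
  have h := fderiv_comp x (D.phi_diff t (D.φ (-t) x)) (D.phi_diff (-t) x)
  rw [hcomp, fderiv_id] at h
  have := congrArg (fun L : Pt d →L[ℝ] Pt d => L w) h
  simpa using this.symm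

lemma iterate_eq (n : ℕ) : (D.φ 1)^[n] = D.φ (n : ℝ) := by
  induction n with
  | zero => funext x; simp [D.flow_zero x]
  | succ n ih =>
    funext x
    rw [Function.iterate_succ_apply', ih]
    rw [← D.flow_add]
    congr 1
    push_cast; ring

lemma X_continuous : Continuous (Xof D.φ) := by
  have hXeq : ∀ x : Pt d, Xof D.φ x =
      fderiv ℝ (Function.uncurry D.φ) (0, x) (1, 0) := by
    intro x
    have hcurve : HasDerivAt (fun s : ℝ => ((s : ℝ), x)) ((1 : ℝ), (0 : Pt d)) 0 :=
      (hasDerivAt_id (0 : ℝ)).prodMk (hasDerivAt_const 0 x)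
    have hF : HasFDerivAt (Function.uncurry D.φ)
        (fderiv ℝ (Function.uncurry D.φ) (0, x)) ((fun s : ℝ => ((s : ℝ), x)) 0) :=
      ((D.flow_smooth.differentiable (by norm_num)) (0, x)).hasFDerivAt
    have h2 : HasDerivAt (fun s : ℝ => D.φ s x)
        (fderiv ℝ (Function.uncurry D.φ) (0, x) (1, 0)) 0 :=
      by have := hF.comp_hasDerivAt 0 hcurve; exact this
    exact ((D.curve_hasDerivAt x).unique h2)
  have hc : Continuous fun x : Pt d => fderiv ℝ (Function.uncurry D.φ) (0, x) :=
    (D.flow_smooth.continuous_fderiv (by norm_num)).comp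
      (continuous_const.prodMk continuous_id)
  have : Continuous fun x : Pt d =>
      fderiv ℝ (Function.uncurry D.φ) (0, x) ((1 : ℝ), (0 : Pt d)) :=
    (ContinuousLinearMap.apply ℝ (Pt d) ((1 : ℝ), (0 : Pt d))).continuous.comp hc
  exact this.congr fun x => (hXeq x).symm

lemma X_mem_Fcu {x : Pt d} (hx : x ∈ D.Λ) {M : ℝ}
    (hM : ∀ y ∈ D.Λ, ‖Xof D.φ y‖ ≤ M) (hM1 : 1 ≤ M) : Xof D.φ x ∈ D.Fcu x := by
  set s : Pt d := D.proj x (Xof D.φ x) with hs_def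
  set u : Pt d := Xof D.φ x - s with hu_def
  have hidem : ∀ y : Pt d, D.proj x (D.proj x y) = D.proj x y := by
    intro y
    have := D.proj_idem x hx
    calc D.proj x (D.proj x y) = ((D.proj x).comp (D.proj x)) y := rfl
      _ = D.proj x y := by rw [this]
  have hs_mem : s ∈ D.Ess x := by
    rw [← D.proj_range x hx]
    exact ⟨Xof D.φ x, rfl⟩
  have hu_mem : u ∈ D.Fcu x := by
    rw [← D.proj_ker x hx]
    have : D.proj x u = 0 := by
      rw [hu_def, map_sub, hs_def, hidem, sub_self]
    exact this
  have hXsu : Xof D.φ x = s + u := by rw [hu_def]; abel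
  suffices hs0 : s = 0 by
    rw [hXsu, hs0, zero_add]; exact hu_mem
  by_contra hs0
  have hsn : 0 < ‖s‖ := norm_pos_iff.2 hs0
  have hMpos : (0 : ℝ) < M := lt_of_lt_of_le one_pos hM1
  set ε : ℝ := ‖s‖ / (2 * D.C * (‖u‖ + M + 1)) with hε_def
  have hεpos : 0 < ε := by
    apply div_pos hsn
    have := D.C_pos
    have := norm_nonneg u
    positivity
  -- find a large time t
  have htend : Filter.Tendsto (fun t : ℝ => Real.exp (-D.lam * t)) atTop (𝓝 0) := by
    have h1 : Filter.Tendsto (fun t : ℝ => D.lam * t) atTop atTop :=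
      Filter.Tendsto.const_mul_atTop D.lam_pos Filter.tendsto_id
    have h2 : Filter.Tendsto (fun t : ℝ => -(D.lam * t)) atTop atBot :=
      tendsto_neg_atTop_atBot.comp h1
    have h3 := Real.tendsto_exp_atBot.comp h2
    have h4 : ∀ t : ℝ, (Real.exp ∘ fun t : ℝ => -(D.lam * t)) t = Real.exp (-D.lam * t) := by
      intro t; simp [Function.comp, neg_mul]
    exact h3.congr h4
  obtain ⟨t, ht⟩ := ((htend.eventually_lt_const hεpos).and (eventually_gt_atTop 0)).exists
  obtain ⟨htε, htpos⟩ := ht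
  set E : ℝ := Real.exp (-D.lam * t) with hE_def
  have hEpos : 0 < E := Real.exp_pos _
  have hEε : E ≤ ε := le_of_lt htε
  set y : Pt d := D.φ (-t) x with hy_def
  have hy : y ∈ D.Λ := by
    rw [hy_def, ← D.invariantΛ (-t)]
    exact ⟨x, hx, rfl⟩
  have hptx : D.φ t y = x := by
    rw [hy_def, ← D.flow_add]
    simp [D.flow_zero]
  set s' : Pt d := fderiv ℝ (D.φ (-t)) x s with hs'_def
  set u' : Pt d := fderiv ℝ (D.φ (-t)) x u with hu'_def
  have hs'_mem : s' ∈ D.Ess y := by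
    rw [hy_def, ← D.inv_Ess x hx (-t)]
    exact Submodule.mem_map_of_mem hs_mem
  have hts : fderiv ℝ (D.φ t) y s' = s := by
    rw [hy_def, hs'_def]; exact D.inverse_deriv x t s
  -- (A) contraction bound
  have hA : ‖s‖ ≤ D.C * E * ‖s'‖ := by
    have := D.contraction y hy t htpos s' hs'_mem
    rwa [hts] at this
  -- (B) domination bound
  have hB : ‖s‖ * ‖u'‖ ≤ D.C * E * ‖s'‖ * ‖u‖ := by
    have hu_mem' : u ∈ D.Fcu (D.φ t y) := by rw [hptx]; exact hu_mem
    have := D.domination y hy t htpos s' hs'_mem u hu_mem'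
    rw [hts, hptx] at this
    exact this
  -- (C) the backward flow vector is bounded
  have hXy : Xof D.φ y = s' + u' := by
    rw [hy_def, D.Xof_image x (-t), hXsu, map_add]
  have hC : ‖s'‖ ≤ M + ‖u'‖ := by
    have h1 : ‖s'‖ ≤ ‖s' + u'‖ + ‖u'‖ := norm_le_add_norm_add s' u'
    have h2 : ‖s' + u'‖ ≤ M := by rw [← hXy]; exact hM y hy
    linarith
  -- numeric contradiction
  have hu0 : (0 : ℝ) ≤ ‖u‖ := norm_nonneg u
  have hs'0 : (0 : ℝ) ≤ ‖s'‖ := norm_nonneg s'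
  have hu'0 : (0 : ℝ) ≤ ‖u'‖ := norm_nonneg u'
  have hCE0 : 0 < D.C * E := mul_pos D.C_pos hEpos
  have hbM : (0 : ℝ) < ‖u‖ + M + 1 := by linarith
  have hεeq2 : D.C * ε * (‖u‖ + M + 1) = ‖s‖ / 2 := by
    have h1 : D.C ≠ 0 := D.C_pos.ne'
    have h2 : ‖u‖ + M + 1 ≠ 0 := hbM.ne'
    rw [hε_def]
    field_simp
  have hCE : D.C * E * (‖u‖ + M + 1) ≤ ‖s‖ / 2 := by
    have hmono : D.C * E * (‖u‖ + M + 1) ≤ D.C * ε * (‖u‖ + M + 1) :=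
      mul_le_mul_of_nonneg_right (mul_le_mul_of_nonneg_left hEε D.C_pos.le) hbM.le
    linarith [hmono, hεeq2.le]
  have hCEb : D.C * E * ‖u‖ ≤ ‖s‖ / 2 := by
    have h1 : D.C * E * ‖u‖ ≤ D.C * E * (‖u‖ + M + 1) :=
      mul_le_mul_of_nonneg_left (by linarith) hCE0.le
    linarith
  -- ‖u'‖ ≤ ‖s'‖ / 2
  have hstep1 : ‖s‖ * ‖u'‖ ≤ ‖s‖ / 2 * ‖s'‖ := by
    have h1 : D.C * E * ‖s'‖ * ‖u‖ = (D.C * E * ‖u‖) * ‖s'‖ := by ring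
    have h2 := mul_le_mul_of_nonneg_right hCEb hs'0
    linarith
  have hstep2 : ‖u'‖ ≤ ‖s'‖ / 2 := by
    have h1 : ‖s‖ * ‖u'‖ ≤ ‖s‖ * (‖s'‖ / 2) := by linarith
    exact le_of_mul_le_mul_left h1 hsn
  have hstep3 : ‖s'‖ ≤ 2 * M := by linarith
  have hfin1 : ‖s‖ ≤ D.C * E * (2 * M) := by
    have h1 : D.C * E * ‖s'‖ ≤ D.C * E * (2 * M) :=
      mul_le_mul_of_nonneg_left hstep3 hCE0.le
    linarith
  have hfin2 : D.C * E * (2 * M) < ‖s‖ := by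
    have h1 : D.C * E * (2 * M) < D.C * E * (2 * (‖u‖ + M + 1)) :=
      mul_lt_mul_of_pos_left (by linarith) hCE0
    nlinarith [hCE]
  linarith

end SingularHyperbolicAttractor

end AuxLemmas

/-- For an ergodic invariant measure on a singular hyperbolic attractor not
supported on the set of singularities, at a.e. (regular) point there is no vector in
`F^{cu}(x) \ ⟨X(x)⟩` whose Lyapunov exponent is zero. -/
theorem no_zero_exponent_in_Fcu_transverse {d : ℕ} (D : SingularHyperbolicAttractor d)
    (μ : MeasureTheory.Measure (Pt d))
    (herg : Ergodic (D.φ 1) μ) (hprob : MeasureTheory.IsProbabilityMeasure μ)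
    (hsupp : μ D.Λᶜ = 0) (hns : μ D.Sing ≠ 1) :
    ∀ᵐ x ∂μ, Xof D.φ x ≠ 0 →
      ¬ ∃ v : Pt d, v ∈ D.Fcu x ∧ v ∉ Submodule.span ℝ {Xof D.φ x} ∧
        Filter.Tendsto
          (fun n : ℕ => Real.log ‖fderiv ℝ ((D.φ 1)^[n]) x v‖ / n)
          Filter.atTop (nhds 0) := by
  have hae : ∀ᵐ x ∂μ, x ∈ D.Λ := by
    rw [MeasureTheory.ae_iff]
    exact hsupp
  filter_upwards [hae] with x hx hX0
  rintro ⟨v, hvF, hvs, hlim⟩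
  -- bound on the vector field over Λ
  obtain ⟨M0, hM0⟩ :=
    D.compactΛ.exists_bound_of_continuousOn (D.X_continuous).continuousOn
  set M : ℝ := max M0 1 with hM_def
  have hM : ∀ y ∈ D.Λ, ‖Xof D.φ y‖ ≤ M := fun y hy =>
    le_trans (hM0 y hy) (le_max_left _ _)
  have hM1 : (1 : ℝ) ≤ M := le_max_right _ _
  have hMpos : (0 : ℝ) < M := lt_of_lt_of_le one_pos hM1
  have hXF : Xof D.φ x ∈ D.Fcu x := D.X_mem_Fcu hx hM hM1
  have hnot : ∀ a : ℝ, v ≠ a • Xof D.φ x := by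
    intro a hEq
    exact hvs (Submodule.mem_span_singleton.mpr ⟨a, hEq.symm⟩)
  have hvind : LinearIndependent ℝ ![v, Xof D.φ x] := by
    rw [linearIndependent_fin2]
    refine ⟨by simpa using hX0, fun a hEq => ?_⟩
    simp only [Matrix.cons_val_one, Matrix.head_cons, Matrix.cons_val_zero] at hEq
    exact hnot a hEq.symm
  set A : ℝ := pArea v (Xof D.φ x) with hA_def
  have hApos : 0 < A := pArea_pos hX0 hnot
  -- key inequality from sectional expansion
  have key : ∀ n : ℕ, 1 ≤ n →
      D.C * Real.exp (D.lam * n) * A ≤ M * ‖fderiv ℝ ((D.φ 1)^[n]) x v‖ := by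
    intro n hn
    rw [D.iterate_eq n]
    have hnpos : (0 : ℝ) < n := by exact_mod_cast hn
    have hsec := D.sectional x hx n hnpos v hvF (Xof D.φ x) hXF hvind
    have hbound : pArea (fderiv ℝ (D.φ n) x v) (fderiv ℝ (D.φ n) x (Xof D.φ x)) ≤
        ‖fderiv ℝ (D.φ n) x v‖ * M := by
      refine le_trans (pArea_le _ _) ?_
      have hmem : D.φ n x ∈ D.Λ := by
        rw [← D.invariantΛ n]; exact ⟨x, hx, rfl⟩
      have : ‖fderiv ℝ (D.φ n) x (Xof D.φ x)‖ ≤ M := by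
        rw [← D.Xof_image x n]
        exact hM _ hmem
      have h0 := norm_nonneg (fderiv ℝ (D.φ n) x v)
      nlinarith
    calc D.C * Real.exp (D.lam * n) * A ≤
        pArea (fderiv ℝ (D.φ n) x v) (fderiv ℝ (D.φ n) x (Xof D.φ x)) := hsec
      _ ≤ ‖fderiv ℝ (D.φ n) x v‖ * M := hbound
      _ = M * ‖fderiv ℝ (D.φ n) x v‖ := mul_comm _ _
  -- take logarithms and divide by n
  have hlog : ∀ n : ℕ, 1 ≤ n →
      (Real.log D.C + Real.log A) / n + D.lam ≤
        Real.log M / n + Real.log ‖fderiv ℝ ((D.φ 1)^[n]) x v‖ / n := by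
    intro n hn
    have hnpos : (0 : ℝ) < n := by exact_mod_cast hn
    set N : ℝ := ‖fderiv ℝ ((D.φ 1)^[n]) x v‖ with hN_def
    have hk := key n hn
    have hLpos : 0 < D.C * Real.exp (D.lam * n) * A := by
      have := D.C_pos
      positivity
    have hNpos : 0 < N := by
      by_contra hcon
      push_neg at hcon
      nlinarith
    have hloglog : Real.log (D.C * Real.exp (D.lam * n) * A) ≤ Real.log (M * N) :=
      Real.log_le_log hLpos hk
    rw [Real.log_mul (mul_pos D.C_pos (Real.exp_pos _)).ne' hApos.ne',
        Real.log_mul D.C_pos.ne' (Real.exp_pos _).ne', Real.log_exp,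
        Real.log_mul hMpos.ne' hNpos.ne'] at hloglog
    have hdiv : (Real.log D.C + D.lam * n + Real.log A) / n ≤
        (Real.log M + Real.log N) / n := by
      gcongr
    have hl : (Real.log D.C + D.lam * n + Real.log A) / n =
        (Real.log D.C + Real.log A) / n + D.lam := by
      field_simp
      ring
    have hr : (Real.log M + Real.log N) / n = Real.log M / n + Real.log N / n :=
      add_div _ _ _
    rw [hl, hr] at hdiv
    exact hdiv
  -- pass to the limit
  have hL : Filter.Tendsto (fun n : ℕ => (Real.log D.C + Real.log A) / n + D.lam)
      atTop (𝓝 (0 + D.lam)) :=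
    (tendsto_const_div_atTop_nhds_zero_nat _).add tendsto_const_nhds
  have hR : Filter.Tendsto
      (fun n : ℕ => Real.log M / n + Real.log ‖fderiv ℝ ((D.φ 1)^[n]) x v‖ / n)
      atTop (𝓝 (0 + 0)) :=
    (tendsto_const_div_atTop_nhds_zero_nat _).add hlim
  have hle : (0 : ℝ) + D.lam ≤ 0 + 0 := by
    refine le_of_tendsto_of_tendsto hL hR ?_
    filter_upwards [Filter.eventually_ge_atTop 1] with n hn
    exact hlog n hn
  have := D.lam_pos
  linarith
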